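/- Every nil-reversible ring is nil-Armendariz. -/

import Mathlib

section NilRev

variable {R : Type*} [Ring R]

/-- `(p*q)^(k+1) = p * (q*p)^k * q`. -/
private lemma mid_pow (p q : R) (k : ℕ) : (p * q) ^ (k + 1) = p * (q * p) ^ k * q := by
  induction k with
  | zero => simp
  | succ k ih =>
    rw [pow_succ, ih, pow_succ]
    simp only [mul_assoc]

private lemma swap_nilp {x y : R} (h : IsNilpotent (x * y)) : IsNilpotent (y * x) := by
  obtain ⟨k, hk⟩ := h
  exact ⟨k + 1, by rw [mid_pow, hk, mul_zero, zero_mul]⟩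

private lemma sq_nilp {x : R} (h : IsNilpotent (x * x)) : IsNilpotent x := by
  obtain ⟨k, hk⟩ := h
  exact ⟨2 * k, by rw [pow_mul, pow_two, hk]⟩

/-- Key rotation lemma: `a^j * (r*a)^k = 0` as soon as `j + k ≥ n`. -/
private lemma L1 (hnr : ∀ a : R, IsNilpotent a → ∀ x : R, x * a = 0 ↔ a * x = 0) (a r : R) (n : ℕ) (ha : a ^ n = 0) :
    ∀ (k j : ℕ), n ≤ j + k → a ^ j * (r * a) ^ k = 0 := by
  intro k
  induction k with
  | zero =>
    intro j hj
    rw [pow_zero, mul_one]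
    exact pow_eq_zero_of_le (by omega) ha
  | succ k ih =>
    intro j hj
    have h2 : a * (a ^ j * (r * a) ^ k * r) = 0 := by
      have : a * (a ^ j * (r * a) ^ k * r) = a ^ (j + 1) * (r * a) ^ k * r := by
        rw [pow_succ']
        simp only [mul_assoc]
      rw [this, ih (j + 1) (by omega), zero_mul]
    have h3 : (a ^ j * (r * a) ^ k * r) * a = 0 := (hnr a ⟨n, ha⟩ _).mpr h2
    calc a ^ j * (r * a) ^ (k + 1) = (a ^ j * (r * a) ^ k * r) * a := by
          rw [pow_succ]; simp only [mul_assoc]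
      _ = 0 := h3

private lemma absorb_left (hnr : ∀ a : R, IsNilpotent a → ∀ x : R, x * a = 0 ↔ a * x = 0) (r x : R) (hx : IsNilpotent x) : IsNilpotent (r * x) := by
  obtain ⟨n, hn⟩ := hx
  refine ⟨n + 1, ?_⟩
  have h := L1 hnr x r n hn n 1 (by omega)
  calc (r * x) ^ (n + 1) = r * (x ^ 1 * (r * x) ^ n) := by
        rw [pow_succ', pow_one]; simp only [mul_assoc]
    _ = 0 := by rw [h, mul_zero]

private lemma absorb_right (hnr : ∀ a : R, IsNilpotent a → ∀ x : R, x * a = 0 ↔ a * x = 0) (x r : R) (hx : IsNilpotent x) : IsNilpotent (x * r) :=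
  swap_nilp (absorb_left hnr r x hx)

/-- "Semicommutativity modulo nilpotents". -/
private lemma nilp_mid (hnr : ∀ a : R, IsNilpotent a → ∀ x : R, x * a = 0 ↔ a * x = 0) (x r y : R) (h : IsNilpotent (x * y)) : IsNilpotent (x * r * y) := by
  have hu : IsNilpotent (y * x) := swap_nilp h
  obtain ⟨t, ht⟩ := absorb_left hnr r (y * x) hu
  refine ⟨t + 1, ?_⟩
  have e1 : x * r * y = x * (r * y) := by rw [mul_assoc]
  rw [e1, mid_pow]
  have e2 : (r * y * x) = r * (y * x) := by rw [mul_assoc]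
  rw [e2, ht, mul_zero, zero_mul]

/-- Key word lemma over boolean lists for additivity. -/
private lemma AB (hnr : ∀ a : R, IsNilpotent a → ∀ x : R, x * a = 0 ↔ a * x = 0) (a b : R) (n : ℕ) (ha : a ^ n = 0) :
    ∀ (l : List Bool) (j : ℕ), n ≤ j + l.count true →
      a ^ j * (l.map fun t => bif t then a else b).prod = 0 := by
  intro l
  induction l using List.reverseRecOn with
  | nil =>
    intro j hj
    simp only [List.map_nil, List.prod_nil, mul_one]
    exact pow_eq_zero_of_le (by simpa using hj) ha
  | append_singleton l t ih =>
    intro j hj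
    rw [List.map_append, List.prod_append]
    simp only [List.map_cons, List.map_nil, List.prod_cons, List.prod_nil, mul_one]
    cases t with
    | false =>
      have hc : n ≤ j + l.count true := by
        simpa [List.count_append] using hj
      rw [← mul_assoc, ih j hc, zero_mul]
    | true =>
      have hc : n ≤ (j + 1) + l.count true := by
        have := hj
        simp [List.count_append] at this
        omega
      have h2 : a * (a ^ j * (l.map fun t => bif t then a else b).prod) = 0 := by
        rw [← mul_assoc, ← pow_succ', ih (j + 1) hc]
      have h3 := (hnr a ⟨n, ha⟩ _).mpr h2
      simp only [Bool.cond_true, ← mul_assoc]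
      exact h3

/-- Binomial expansion into boolean words (noncommutative). -/
private lemma EXP (x y : R) : ∀ K : ℕ,
    (x + y) ^ K = ∑ v : Fin K → Bool, ((List.ofFn v).map fun t => bif t then x else y).prod := by
  intro K
  induction K with
  | zero => simp
  | succ K ih =>
    have hre : ∑ v : Fin (K+1) → Bool, ((List.ofFn v).map fun t => bif t then x else y).prod
        = ∑ p : Bool × (Fin K → Bool),
            ((List.ofFn (Fin.cons p.1 p.2 : Fin (K+1) → Bool)).map
              fun t => bif t then x else y).prod := by
      refine (Fintype.sum_equiv (Fin.consEquiv fun _ => Bool) _ _ fun p => ?_).symm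
      rfl
    rw [hre, Fintype.sum_prod_type]
    have hterm : ∀ (c : Bool) (u : Fin K → Bool),
        ((List.ofFn (Fin.cons c u : Fin (K+1) → Bool)).map fun t => bif t then x else y).prod
        = (bif c then x else y) * ((List.ofFn u).map fun t => bif t then x else y).prod := by
      intro c u
      rw [List.ofFn_succ]
      simp only [Fin.cons_zero, Fin.cons_succ, List.map_cons, List.prod_cons]
    simp only [hterm]
    rw [Fintype.sum_bool]
    simp only [Bool.cond_true, Bool.cond_false, ← Finset.mul_sum]
    rw [← ih, pow_succ', add_mul]

private lemma CNT : ∀ l : List Bool, l.count true + l.count false = l.length := by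
  intro l
  induction l with
  | nil => simp
  | cons h t ih => cases h <;> simp [List.count_cons] <;> omega

private lemma CNT2 : ∀ l : List Bool, (l.map not).count true = l.count false := by
  intro l
  induction l with
  | nil => simp
  | cons h t ih => cases h <;> simp [List.count_cons, ih]

private lemma nilp_add (hnr : ∀ a : R, IsNilpotent a → ∀ x : R, x * a = 0 ↔ a * x = 0) {x y : R} (hx : IsNilpotent x) (hy : IsNilpotent y) :
    IsNilpotent (x + y) := by
  obtain ⟨n, hn⟩ := hx
  obtain ⟨m, hm⟩ := hy
  refine ⟨n + m, ?_⟩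
  rw [EXP]
  refine Finset.sum_eq_zero fun v _ => ?_
  set l : List Bool := List.ofFn v with hl
  have hlen : l.length = n + m := by simp [hl]
  have hcnt := CNT l
  by_cases hc : n ≤ l.count true
  · have := AB hnr x y n hn l 0 (by omega)
    simpa using this
  · have hcf : m ≤ l.count false := by omega
    have h1 := AB hnr y x m hm (l.map not) 0 (by rw [CNT2]; omega)
    have h2 : ((l.map not).map fun t => bif t then y else x)
        = l.map fun t => bif t then x else y := by
      rw [List.map_map]
      refine List.map_congr_left fun t _ => ?_
      cases t <;> simp
    rw [h2] at h1
    simpa using h1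

private lemma nilp_sum (hnr : ∀ a : R, IsNilpotent a → ∀ x : R, x * a = 0 ↔ a * x = 0) {ι : Type*} (s : Finset ι) (f : ι → R)
    (h : ∀ i ∈ s, IsNilpotent (f i)) : IsNilpotent (∑ i ∈ s, f i) := by
  classical
  induction s using Finset.cons_induction with
  | empty => simp only [Finset.sum_empty]; exact IsNilpotent.zero
  | cons a s ha ih =>
    rw [Finset.sum_cons]
    exact nilp_add hnr (h a (Finset.mem_cons_self a s))
      (ih fun i hi => h i (Finset.mem_cons_of_mem hi))

end NilRev

open Polynomial in
/-- Every nil-reversible ring is nil-Armendariz. -/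
theorem nilReversible_is_nilArmendariz (R : Type*) [Ring R]
    (hnr : ∀ a : R, IsNilpotent a → ∀ x : R, x * a = 0 ↔ a * x = 0) :
    ∀ f g : R[X], (∀ k : ℕ, IsNilpotent ((f * g).coeff k)) →
      ∀ i j : ℕ, IsNilpotent (f.coeff i * g.coeff j) := by
  intro f g hfg
  suffices H : ∀ k : ℕ, ∀ i j : ℕ, i + j = k → IsNilpotent (f.coeff i * g.coeff j) by
    intro i j; exact H (i + j) i j rfl
  intro k
  induction k using Nat.strong_induction_on with
  | _ k IH =>
    suffices H2 : ∀ s : ℕ, ∀ i : ℕ, i + s = k → IsNilpotent (f.coeff i * g.coeff s) by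
      intro i j hij; exact H2 j i hij
    intro s
    induction s using Nat.strong_induction_on with
    | _ s IHs =>
      intro i his
      -- X := coeff k of f*g, multiplied by g.coeff s
      have hX : IsNilpotent (∑ p ∈ Finset.HasAntidiagonal.antidiagonal k,
          (f.coeff p.1 * g.coeff p.2) * g.coeff s) := by
        have h0 := absorb_right hnr _ (g.coeff s) (hfg k)
        rw [coeff_mul, Finset.sum_mul] at h0
        exact h0
      have hmem : ((i, s) : ℕ × ℕ) ∈ Finset.HasAntidiagonal.antidiagonal k := by
        rw [Finset.HasAntidiagonal.mem_antidiagonal]; exact his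
      rw [← Finset.add_sum_erase _ _ hmem] at hX
      have hrest : IsNilpotent (∑ p ∈ (Finset.HasAntidiagonal.antidiagonal k).erase (i, s),
          (f.coeff p.1 * g.coeff p.2) * g.coeff s) := by
        refine nilp_sum hnr _ _ fun p hp => ?_
        have hpk : p.1 + p.2 = k := by
          have := Finset.mem_of_mem_erase hp
          rwa [Finset.HasAntidiagonal.mem_antidiagonal] at this
        have hpne : p ≠ (i, s) := Finset.ne_of_mem_erase hp
        rcases lt_trichotomy p.2 s with hlt | heq | hgt
        · exact absorb_right hnr _ (g.coeff s) (IHs p.2 hlt p.1 hpk)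
        · exfalso
          apply hpne
          have : p.1 = i := by omega
          exact Prod.ext this heq
        · have h1 : p.1 + s < k := by omega
          have h2 : IsNilpotent (f.coeff p.1 * g.coeff s) := IH (p.1 + s) h1 p.1 s rfl
          exact nilp_mid hnr _ (g.coeff p.2) _ h2
      have hT : IsNilpotent ((f.coeff i * g.coeff s) * g.coeff s) := by
        have := nilp_add hnr hX hrest.neg
        simpa using this
      -- now t := f.coeff i * g.coeff s; t * (g.coeff s) nilpotent
      set t := f.coeff i * g.coeff s with hts
      have h1 : IsNilpotent (g.coeff s * t) := swap_nilp hT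
      have h2 : IsNilpotent (f.coeff i * (g.coeff s * t)) := absorb_left hnr _ _ h1
      have h3 : t * t = f.coeff i * (g.coeff s * t) := by
        rw [hts]; simp only [mul_assoc]
      exact sq_nilp (by rw [h3]; exact h2)
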